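/- arXiv:math/9805119 — 2 statements merged into one kernel-verified Lean document; each statement's English description precedes it below -/
import Mathlib

section
/- The image B = Π(A) is a unital subalgebra of A: it is a K-submodule containing 1_A and closed under products. Moreover B is a left coideal of A: for every b ∈ B, Δ(b) lies in the submodule A ⊗ B of A ⊗ A. -/
open TensorProduct

/-- The projection `Π : A → A` defined by `Π(a) = a₁ · i(κ_H(π(a₂)))` (Sweedler notation),
for bialgebra homomorphisms `π : A → H` and `i : H → A`. -/
noncomputable def PiMap (K : Type*) {A H : Type*} [CommRing K] [Ring A] [Ring H]
    [HopfAlgebra K A] [HopfAlgebra K H]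
    (π : A →ₐc[K] H) (i : H →ₐc[K] A) : A →ₗ[K] A :=
  (LinearMap.mul' K A) ∘ₗ
    (TensorProduct.map LinearMap.id
      ((i : H →ₗ[K] A) ∘ₗ (HopfAlgebra.antipode (R := K) (A := H)) ∘ₗ (π : A →ₗ[K] H))) ∘ₗ
    (Coalgebra.comul (R := K) (A := A))

open Coalgebra

section Helpers

variable {K : Type*} [CommRing K]

section Coalg
variable {C : Type*} [AddCommGroup C] [Module K C] [Coalgebra K C]

lemma sum_T_eq {M : Type*} [AddCommGroup M] [Module K M]
    (T : C ⊗[K] (C ⊗[K] C) →ₗ[K] M) {a : C} {ι : Type*} {ι₁ ι₂ : ι → Type*} (r : Coalgebra.Repr K a ι)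
    (a₁ : ∀ i, Coalgebra.Repr K (r.left i) (ι₁ i)) (a₂ : ∀ i, Coalgebra.Repr K (r.right i) (ι₂ i)) :
    (∑ i ∈ r.index, ∑ j ∈ (a₁ i).index,
        T ((a₁ i).left j ⊗ₜ[K] ((a₁ i).right j ⊗ₜ[K] r.right i))) =
    ∑ i ∈ r.index, ∑ k ∈ (a₂ i).index,
        T (r.left i ⊗ₜ[K] ((a₂ i).left k ⊗ₜ[K] (a₂ i).right k)) := by
  have h := Coalgebra.sum_tmul_tmul_eq (R := K) r a₁ a₂
  have := congrArg T h
  simpa only [map_sum] using this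

lemma sum_counit_smul_left {a : C} {ι : Type*} (r : Coalgebra.Repr K a ι) :
    ∑ i ∈ r.index, Coalgebra.counit (R := K) (r.left i) • r.right i = a := by
  have h := Coalgebra.sum_counit_tmul_eq (R := K) r
  have := congrArg (TensorProduct.lid K C) h
  simpa only [map_sum, lid_tmul, one_smul] using this

lemma sum_counit_smul_right {a : C} {ι : Type*} (r : Coalgebra.Repr K a ι) :
    ∑ i ∈ r.index, Coalgebra.counit (R := K) (r.right i) • r.left i = a := by
  have h := Coalgebra.sum_tmul_counit_eq (R := K) r
  have := congrArg (TensorProduct.rid K C) h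
  simpa only [map_sum, rid_tmul, one_smul] using this

end Coalg

section Conv

variable {C L : Type*} [AddCommGroup C] [Module K C] [Coalgebra K C]
  [Ring L] [Algebra K L]

/-- Convolution product on `Hom(C, L)`. -/
noncomputable def conv (f g : C →ₗ[K] L) : C →ₗ[K] L :=
  LinearMap.mul' K L ∘ₗ TensorProduct.map f g ∘ₗ Coalgebra.comul

/-- Convolution unit. -/
noncomputable def convUnit : C →ₗ[K] L :=
  Algebra.linearMap K L ∘ₗ Coalgebra.counit

lemma conv_repr (f g : C →ₗ[K] L) {a : C} {ι : Type*} (r : Coalgebra.Repr K a ι) :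
    conv f g a = ∑ i ∈ r.index, f (r.left i) * g (r.right i) := by
  simp only [conv, LinearMap.comp_apply, ← r.eq, map_sum, TensorProduct.map_tmul,
    LinearMap.mul'_apply]

lemma convUnit_apply (a : C) : (convUnit (K := K) (L := L)) a
    = algebraMap K L (Coalgebra.counit (R := K) a) := rfl

lemma conv_unit_right (f : C →ₗ[K] L) : conv f convUnit = f := by
  ext a
  have r := ℛ K a
  rw [conv_repr f convUnit r]
  calc ∑ i ∈ r.index, f (r.left i) * convUnit (r.right i)
      = ∑ i ∈ r.index, f (Coalgebra.counit (R := K) (r.right i) • r.left i) := by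
        refine Finset.sum_congr rfl fun j _ => ?_
        rw [convUnit_apply, Algebra.algebraMap_eq_smul_one, mul_smul_comm, mul_one, map_smul]
    _ = f a := by rw [← map_sum, sum_counit_smul_right r]

lemma conv_unit_left (f : C →ₗ[K] L) : conv convUnit f = f := by
  ext a
  have r := ℛ K a
  rw [conv_repr convUnit f r]
  calc ∑ i ∈ r.index, convUnit (r.left i) * f (r.right i)
      = ∑ i ∈ r.index, f (Coalgebra.counit (R := K) (r.left i) • r.right i) := by
        refine Finset.sum_congr rfl fun j _ => ?_
        rw [convUnit_apply, Algebra.algebraMap_eq_smul_one, smul_mul_assoc, one_mul, map_smul]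
    _ = f a := by rw [← map_sum, sum_counit_smul_left r]

lemma conv_assoc (f g h : C →ₗ[K] L) : conv (conv f g) h = conv f (conv g h) := by
  ext a
  have r := ℛ K a
  have u : ∀ i, Coalgebra.Repr K (r.left i) (C × C) := fun i => ℛ K (r.left i)
  have v : ∀ i, Coalgebra.Repr K (r.right i) (C × C) := fun i => ℛ K (r.right i)
  set T : C ⊗[K] (C ⊗[K] C) →ₗ[K] L :=
    LinearMap.mul' K L ∘ₗ TensorProduct.map f (LinearMap.mul' K L ∘ₗ TensorProduct.map g h)
    with hT
  have hTapp : ∀ x y z : C, T (x ⊗ₜ (y ⊗ₜ z)) = f x * (g y * h z) := by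
    intro x y z
    simp [hT]
  have key := sum_T_eq T r u v
  calc conv (conv f g) h a
      = ∑ i ∈ r.index, conv f g (r.left i) * h (r.right i) := conv_repr _ _ r
    _ = ∑ i ∈ r.index, ∑ j ∈ (u i).index,
          T ((u i).left j ⊗ₜ ((u i).right j ⊗ₜ r.right i)) := by
        refine Finset.sum_congr rfl fun j _ => ?_
        rw [conv_repr f g (u j), Finset.sum_mul]
        exact Finset.sum_congr rfl fun k _ => by rw [hTapp, mul_assoc]
    _ = ∑ i ∈ r.index, ∑ k ∈ (v i).index,
          T (r.left i ⊗ₜ ((v i).left k ⊗ₜ (v i).right k)) := key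
    _ = ∑ i ∈ r.index, f (r.left i) * conv g h (r.right i) := by
        refine Finset.sum_congr rfl fun j _ => ?_
        rw [conv_repr g h (v j), Finset.mul_sum]
        exact Finset.sum_congr rfl fun k _ => (hTapp _ _ _)
    _ = conv f (conv g h) a := (conv_repr _ _ r).symm

end Conv
end Helpers
section Hopf
variable {K : Type*} [CommRing K] {H : Type*} [Ring H] [HopfAlgebra K H]

local notation "κ" => HopfAlgebra.antipode (R := K) (A := H)

lemma antipode_one' : κ (1 : H) = 1 := by
  have h := HopfAlgebra.mul_antipode_rTensor_comul_apply (R := K) (A := H) (a := (1 : H))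
  simpa [Bialgebra.comul_one, Algebra.TensorProduct.one_def] using h

noncomputable def comulL : H →ₗ[K] H ⊗[K] H := Coalgebra.comul

lemma conv_comul_comulAntipode :
    conv (K := K) comulL (comulL ∘ₗ κ) = convUnit := by
  ext a
  have r := ℛ K a
  rw [conv_repr _ _ r]
  calc ∑ i ∈ r.index, comulL (r.left i) * (comulL ∘ₗ κ) (r.right i)
      = ∑ i ∈ r.index, Coalgebra.comul (R := K) (r.left i * κ (r.right i)) := by
        refine Finset.sum_congr rfl fun j _ => ?_
        simp [comulL, Bialgebra.comul_mul]
    _ = Coalgebra.comul (R := K) (∑ i ∈ r.index, r.left i * κ (r.right i)) := by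
        rw [map_sum]
    _ = convUnit a := by
        rw [HopfAlgebra.sum_mul_antipode_eq_algebraMap_counit r, Bialgebra.comul_algebraMap, convUnit_apply]

noncomputable def antipodeFlip : H →ₗ[K] H ⊗[K] H :=
  (TensorProduct.comm K H H).toLinearMap ∘ₗ TensorProduct.map κ κ ∘ₗ Coalgebra.comul

lemma conv_antipodeFlip_comul :
    conv (antipodeFlip (K := K) (H := H)) (comulL (K := K) (H := H)) = convUnit := by
  ext a
  have r := ℛ K a
  have u : ∀ i, Coalgebra.Repr K (r.left i) (H × H) := fun i => ℛ K (r.left i)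
  have v : ∀ i, Coalgebra.Repr K (r.right i) (H × H) := fun i => ℛ K (r.right i)
  have p : ∀ i k, Coalgebra.Repr K ((v i).left k) (H × H) := fun i k => ℛ K ((v i).left k)
  have w : ∀ i k, Coalgebra.Repr K ((v i).right k) (H × H) := fun i k => ℛ K ((v i).right k)
  set W : H ⊗[K] (H ⊗[K] H) →ₗ[K] H ⊗[K] H :=
    LinearMap.mul' K (H ⊗[K] H) ∘ₗ
      TensorProduct.map ((TensorProduct.comm K H H).toLinearMap ∘ₗ TensorProduct.map κ κ)
        (Coalgebra.comul) ∘ₗ (TensorProduct.assoc K H H H).symm.toLinearMap with hW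
  have hWapp : ∀ x y z : H, W (x ⊗ₜ (y ⊗ₜ z)) =
      (κ y ⊗ₜ κ x) * Coalgebra.comul (R := K) z := by
    intro x y z; simp [hW]
  rw [conv_repr _ _ r]
  calc ∑ i ∈ r.index, antipodeFlip (r.left i) * comulL (r.right i)
      = ∑ i ∈ r.index, ∑ j ∈ (u i).index,
          W ((u i).left j ⊗ₜ ((u i).right j ⊗ₜ r.right i)) := by
        refine Finset.sum_congr rfl fun j _ => ?_
        rw [antipodeFlip]
        simp only [LinearMap.comp_apply, ← (u j).eq, map_sum, TensorProduct.map_tmul,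
          comm_tmul, comulL]
        rw [Finset.sum_mul]
        exact Finset.sum_congr rfl fun k _ => (hWapp _ _ _).symm
    _ = ∑ i ∈ r.index, ∑ k ∈ (v i).index,
          W (r.left i ⊗ₜ ((v i).left k ⊗ₜ (v i).right k)) := sum_T_eq W r u v
    _ = ∑ i ∈ r.index, ∑ k ∈ (v i).index, ∑ m ∈ (w i k).index,
          (κ ((v i).left k) * (w i k).left m) ⊗ₜ (κ (r.left i) * (w i k).right m) := by
        refine Finset.sum_congr rfl fun j _ => Finset.sum_congr rfl fun k _ => ?_
        rw [hWapp, ← (w j k).eq, Finset.mul_sum]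
        exact Finset.sum_congr rfl fun m _ => by
          rw [Algebra.TensorProduct.tmul_mul_tmul]
    _ = ∑ i ∈ r.index, ∑ k ∈ (v i).index, ∑ m ∈ (p i k).index,
          (κ ((p i k).left m) * (p i k).right m) ⊗ₜ (κ (r.left i) * (v i).right k) := by
        refine Finset.sum_congr rfl fun j _ => ?_
        set U : H ⊗[K] (H ⊗[K] H) →ₗ[K] H ⊗[K] H :=
          TensorProduct.map (LinearMap.mul' K H ∘ₗ TensorProduct.map κ LinearMap.id)
            (LinearMap.mulLeft K (κ (r.left j))) ∘ₗ
            (TensorProduct.assoc K H H H).symm.toLinearMap with hU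
        have hUapp : ∀ x y z : H, U (x ⊗ₜ (y ⊗ₜ z)) =
            (κ x * y) ⊗ₜ (κ (r.left j) * z) := by
          intro x y z; simp [hU]
        have key := sum_T_eq U (v j) (p j) (w j)
        simp only [hUapp] at key
        exact key.symm
    _ = ∑ i ∈ r.index, (1 : H) ⊗ₜ[K] (κ (r.left i) * r.right i) := by
        refine Finset.sum_congr rfl fun j _ => ?_
        calc ∑ k ∈ (v j).index, ∑ m ∈ (p j k).index,
              (κ ((p j k).left m) * (p j k).right m) ⊗ₜ[K] (κ (r.left j) * (v j).right k)
            = ∑ k ∈ (v j).index,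
              Coalgebra.counit (R := K) ((v j).left k) •
                ((1 : H) ⊗ₜ[K] (κ (r.left j) * (v j).right k)) := by
              refine Finset.sum_congr rfl fun k _ => ?_
              rw [← TensorProduct.sum_tmul, HopfAlgebra.sum_antipode_mul_eq_algebraMap_counit (p j k),
                Algebra.algebraMap_eq_smul_one, ← TensorProduct.smul_tmul']
          _ = (1 : H) ⊗ₜ[K]
                (κ (r.left j) * ∑ k ∈ (v j).index,
                  Coalgebra.counit (R := K) ((v j).left k) • (v j).right k) := by
              rw [Finset.mul_sum, tmul_sum]
              refine Finset.sum_congr rfl fun k _ => ?_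
              rw [mul_smul_comm, tmul_smul]
          _ = (1 : H) ⊗ₜ[K] (κ (r.left j) * r.right j) := by
              rw [sum_counit_smul_left (v j)]
    _ = convUnit a := by
        rw [← tmul_sum, HopfAlgebra.sum_antipode_mul_eq_algebraMap_counit r, convUnit_apply,
          Algebra.TensorProduct.algebraMap_apply, Algebra.algebraMap_eq_smul_one,
          tmul_smul, TensorProduct.smul_tmul']

lemma comul_antipode' :
    (Coalgebra.comul (R := K) (A := H)) ∘ₗ κ =
      (TensorProduct.comm K H H).toLinearMap ∘ₗ TensorProduct.map κ κ ∘ₗ Coalgebra.comul := by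
  have h1 := conv_comul_comulAntipode (K := K) (H := H)
  have h3 := conv_antipodeFlip_comul (K := K) (H := H)
  have : antipodeFlip (K := K) (H := H) = comulL ∘ₗ κ := by
    calc antipodeFlip (K := K) (H := H)
        = conv antipodeFlip convUnit := (conv_unit_right _).symm
      _ = conv antipodeFlip (conv comulL (comulL ∘ₗ κ)) := by rw [h1]
      _ = conv (conv antipodeFlip comulL) (comulL ∘ₗ κ) := (conv_assoc _ _ _).symm
      _ = conv convUnit (comulL ∘ₗ κ) := by rw [h3]
      _ = comulL ∘ₗ κ := conv_unit_left _
  exact this.symm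

lemma comul_antipode_repr {x : H} {ι : Type*} (r : Coalgebra.Repr K x ι) :
    Coalgebra.comul (R := K) (κ x) =
      ∑ i ∈ r.index, κ (r.right i) ⊗ₜ[K] κ (r.left i) := by
  have := congrArg (fun f : H →ₗ[K] H ⊗[K] H => f x) (comul_antipode' (K := K) (H := H))
  simp only [LinearMap.comp_apply] at this
  rw [this, ← r.eq]
  simp

end Hopf


section Main

variable {K A H : Type*} [CommRing K] [Ring A] [Ring H]
    [HopfAlgebra K A] [HopfAlgebra K H]
    (π : A →ₐc[K] H) (i : H →ₐc[K] A)

local notation "κA" => HopfAlgebra.antipode (R := K) (A := A)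
local notation "κH" => HopfAlgebra.antipode (R := K) (A := H)

/-- `S = i ∘ κ_H ∘ π` as a linear map. -/
noncomputable def Smap : A →ₗ[K] A :=
  (i : H →ₗ[K] A) ∘ₗ (HopfAlgebra.antipode (R := K) (A := H)) ∘ₗ (π : A →ₗ[K] H)

lemma Smap_apply (x : A) : Smap π i x = i (κH (π x)) := by
  simp [Smap]

lemma PiMap_repr {a : A} {ι : Type*} (r : Coalgebra.Repr K a ι) :
    PiMap K π i a = ∑ j ∈ r.index, r.left j * Smap π i (r.right j) := by
  simp only [PiMap, Smap, LinearMap.comp_apply, ← r.eq, map_sum, TensorProduct.map_tmul,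
    LinearMap.mul'_apply, LinearMap.id_apply]

variable (hπi : π.comp i = BialgHom.id K H)
include hπi

lemma pi_i_apply (h : H) : π (i h) = h := by
  have := DFunLike.congr_fun hπi h
  simpa using this

lemma pi_Smap (x : A) : π (Smap π i x) = κH (π x) := by
  rw [Smap_apply, pi_i_apply π i hπi]

omit hπi

lemma comul_Smap {x : A} {ι : Type*} (r : Coalgebra.Repr K x ι) :
    Coalgebra.comul (R := K) (Smap π i x) =
      ∑ j ∈ r.index, Smap π i (r.right j) ⊗ₜ[K] Smap π i (r.left j) := by
  rw [Smap_apply]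
  rw [← CoalgHomClass.map_comp_comul_apply i (κH (π x))]
  rw [comul_antipode_repr (r.induced π)]
  simp [Repr.induced, Smap_apply]

/-- `τ = (id ⊗ π) ∘ Δ` as an algebra homomorphism. -/
noncomputable def tauAlg : A →ₐ[K] A ⊗[K] H :=
  (Algebra.TensorProduct.map (AlgHom.id K A) (π : A →ₐ[K] H)).comp (Bialgebra.comulAlgHom K A)

lemma tau_repr {a : A} {ι : Type*} (r : Coalgebra.Repr K a ι) :
    tauAlg π a = ∑ j ∈ r.index, r.left j ⊗ₜ[K] π (r.right j) := by
  simp only [tauAlg, AlgHom.comp_apply, Bialgebra.comulAlgHom_apply, ← r.eq, map_sum,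
    Algebra.TensorProduct.map_tmul, AlgHom.coe_id, id_eq]
  rfl

lemma tau_eq_map (a : A) :
    tauAlg π a = TensorProduct.map LinearMap.id (π : A →ₗ[K] H) (Coalgebra.comul a) := by
  have r := ℛ K a
  rw [tau_repr π r, ← r.eq, map_sum]
  simp

include hπi

lemma tau_Smap {x : A} {ι : Type*} (ρ : Coalgebra.Repr K x ι) :
    tauAlg π (Smap π i x) =
      ∑ j ∈ ρ.index, Smap π i (ρ.right j) ⊗ₜ[K] κH (π (ρ.left j)) := by
  rw [tau_eq_map, comul_Smap π i ρ, map_sum]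
  refine Finset.sum_congr rfl fun j _ => ?_
  simp [pi_Smap π i hπi]

end Main

section Main2

variable {K A H : Type*} [CommRing K] [Ring A] [Ring H]
    [HopfAlgebra K A] [HopfAlgebra K H]
    (π : A →ₐc[K] H) (i : H →ₐc[K] A)

local notation "κH" => HopfAlgebra.antipode (R := K) (A := H)

lemma tau_PiMap (hπi : π.comp i = BialgHom.id K H) (a : A) :
    tauAlg π (PiMap K π i a) = PiMap K π i a ⊗ₜ[K] (1 : H) := by
  classical
  have r := ℛ K a
  have u : ∀ j, Coalgebra.Repr K (r.left j) (A × A) := fun j => ℛ K (r.left j)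
  have v : ∀ j, Coalgebra.Repr K (r.right j) (A × A) := fun j => ℛ K (r.right j)
  have p : ∀ j k, Coalgebra.Repr K ((v j).left k) (A × A) := fun j k => ℛ K ((v j).left k)
  have w : ∀ j k, Coalgebra.Repr K ((v j).right k) (A × A) := fun j k => ℛ K ((v j).right k)
  set M : A ⊗[K] (A ⊗[K] A) →ₗ[K] A ⊗[K] H :=
    LinearMap.mul' K (A ⊗[K] H) ∘ₗ
      TensorProduct.map (TensorProduct.map LinearMap.id (π : A →ₗ[K] H))
        ((tauAlg π).toLinearMap ∘ₗ Smap π i) ∘ₗ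
      (TensorProduct.assoc K A A A).symm.toLinearMap with hM
  have hMapp : ∀ x y z : A,
      M (x ⊗ₜ (y ⊗ₜ z)) = (x ⊗ₜ[K] π y) * tauAlg π (Smap π i z) := by
    intro x y z; simp [hM]
  calc tauAlg π (PiMap K π i a)
      = ∑ j ∈ r.index, tauAlg π (r.left j) * tauAlg π (Smap π i (r.right j)) := by
        rw [PiMap_repr π i r, map_sum]
        exact Finset.sum_congr rfl fun j _ => map_mul _ _ _
    _ = ∑ j ∈ r.index, ∑ m ∈ (u j).index,
          M ((u j).left m ⊗ₜ ((u j).right m ⊗ₜ r.right j)) := by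
        refine Finset.sum_congr rfl fun j _ => ?_
        rw [tau_repr π (u j), Finset.sum_mul]
        exact Finset.sum_congr rfl fun m _ => (hMapp _ _ _).symm
    _ = ∑ j ∈ r.index, ∑ k ∈ (v j).index,
          M (r.left j ⊗ₜ ((v j).left k ⊗ₜ (v j).right k)) := sum_T_eq M r u v
    _ = ∑ j ∈ r.index, ∑ k ∈ (v j).index, ∑ m ∈ (w j k).index,
          (r.left j * Smap π i ((w j k).right m)) ⊗ₜ[K]
            (π ((v j).left k) * κH (π ((w j k).left m))) := by
        refine Finset.sum_congr rfl fun j _ => Finset.sum_congr rfl fun k _ => ?_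
        rw [hMapp, tau_Smap π i hπi (w j k), Finset.mul_sum]
        exact Finset.sum_congr rfl fun m _ => by
          rw [Algebra.TensorProduct.tmul_mul_tmul]
    _ = ∑ j ∈ r.index, ∑ k ∈ (v j).index, ∑ m ∈ (p j k).index,
          (r.left j * Smap π i ((v j).right k)) ⊗ₜ[K]
            (π ((p j k).left m) * κH (π ((p j k).right m))) := by
        refine Finset.sum_congr rfl fun j _ => ?_
        set N : A ⊗[K] (A ⊗[K] A) →ₗ[K] A ⊗[K] H :=
          (TensorProduct.comm K H A).toLinearMap ∘ₗ
            TensorProduct.map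
              (LinearMap.mul' K H ∘ₗ
                TensorProduct.map (π : A →ₗ[K] H) (κH ∘ₗ (π : A →ₗ[K] H)))
              (LinearMap.mulLeft K (r.left j) ∘ₗ Smap π i) ∘ₗ
            (TensorProduct.assoc K A A A).symm.toLinearMap with hN
        have hNapp : ∀ x y z : A, N (x ⊗ₜ (y ⊗ₜ z)) =
            (r.left j * Smap π i z) ⊗ₜ[K] (π x * κH (π y)) := by
          intro x y z; simp [hN]
        have key := sum_T_eq N (v j) (p j) (w j)
        simp only [hNapp] at key
        exact key.symm
    _ = ∑ j ∈ r.index, (r.left j * Smap π i (r.right j)) ⊗ₜ[K] (1 : H) := by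
        refine Finset.sum_congr rfl fun j _ => ?_
        calc ∑ k ∈ (v j).index, ∑ m ∈ (p j k).index,
              (r.left j * Smap π i ((v j).right k)) ⊗ₜ[K]
                (π ((p j k).left m) * κH (π ((p j k).right m)))
            = ∑ k ∈ (v j).index, Coalgebra.counit (R := K) ((v j).left k) •
                ((r.left j * Smap π i ((v j).right k)) ⊗ₜ[K] (1 : H)) := by
              refine Finset.sum_congr rfl fun k _ => ?_
              rw [← tmul_sum]
              have hs' : (∑ m ∈ (p j k).index,
                  π ((p j k).left m) * κH (π ((p j k).right m))) =
                  algebraMap K H (Coalgebra.counit (R := K) (π ((v j).left k))) :=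
                HopfAlgebra.sum_mul_antipode_eq_algebraMap_counit ((p j k).induced π)
              rw [hs', CoalgHomClass.counit_comp_apply, Algebra.algebraMap_eq_smul_one,
                tmul_smul]
          _ = (r.left j * Smap π i
                (∑ k ∈ (v j).index,
                  Coalgebra.counit (R := K) ((v j).left k) • (v j).right k)) ⊗ₜ[K] (1 : H) := by
              rw [map_sum, Finset.mul_sum, TensorProduct.sum_tmul]
              refine Finset.sum_congr rfl fun k _ => ?_
              rw [map_smul, mul_smul_comm, ← TensorProduct.smul_tmul']
          _ = (r.left j * Smap π i (r.right j)) ⊗ₜ[K] (1 : H) := by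
              rw [sum_counit_smul_left (v j)]
    _ = PiMap K π i a ⊗ₜ[K] (1 : H) := by
        rw [← TensorProduct.sum_tmul, ← PiMap_repr π i r]

lemma PiMap_of_coinv (hπi : π.comp i = BialgHom.id K H) (a : A)
    (h : tauAlg π a = a ⊗ₜ[K] (1 : H)) : PiMap K π i a = a := by
  have hS : TensorProduct.map (LinearMap.id (R := K) (M := A)) (Smap π i) =
      TensorProduct.map LinearMap.id ((i : H →ₗ[K] A) ∘ₗ κH) ∘ₗ
        TensorProduct.map LinearMap.id (π : A →ₗ[K] H) := by
    ext x y
    simp [Smap]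
  have h0 : PiMap K π i a =
      LinearMap.mul' K A (TensorProduct.map LinearMap.id (Smap π i)
        (Coalgebra.comul (R := K) a)) := rfl
  rw [h0, hS, LinearMap.comp_apply, ← tau_eq_map, h]
  simp [antipode_one', TensorProduct.map_tmul]

lemma comul_PiMap_mem (a : A) :
    Coalgebra.comul (R := K) (PiMap K π i a) ∈
      LinearMap.range
        (LinearMap.lTensor A (LinearMap.range (PiMap K π i)).subtype) := by
  classical
  have r := ℛ K a
  have u : ∀ j, Coalgebra.Repr K (r.left j) (A × A) := fun j => ℛ K (r.left j)
  have v : ∀ j, Coalgebra.Repr K (r.right j) (A × A) := fun j => ℛ K (r.right j)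
  have p : ∀ j k, Coalgebra.Repr K ((v j).left k) (A × A) := fun j k => ℛ K ((v j).left k)
  have w : ∀ j k, Coalgebra.Repr K ((v j).right k) (A × A) := fun j k => ℛ K ((v j).right k)
  set M : A ⊗[K] (A ⊗[K] A) →ₗ[K] A ⊗[K] A :=
    LinearMap.mul' K (A ⊗[K] A) ∘ₗ
      TensorProduct.map LinearMap.id
        ((Coalgebra.comul (R := K) (A := A)) ∘ₗ Smap π i) ∘ₗ
      (TensorProduct.assoc K A A A).symm.toLinearMap with hM
  have hMapp : ∀ x y z : A, M (x ⊗ₜ (y ⊗ₜ z)) =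
      (x ⊗ₜ[K] y) * Coalgebra.comul (R := K) (Smap π i z) := by
    intro x y z; simp [hM]
  have formula : Coalgebra.comul (R := K) (PiMap K π i a) =
      ∑ j ∈ r.index, ∑ k ∈ (v j).index,
        (r.left j * Smap π i ((v j).right k)) ⊗ₜ[K] PiMap K π i ((v j).left k) := by
    calc Coalgebra.comul (R := K) (PiMap K π i a)
        = ∑ j ∈ r.index,
            Coalgebra.comul (R := K) (r.left j) *
              Coalgebra.comul (R := K) (Smap π i (r.right j)) := by
          rw [PiMap_repr π i r, map_sum]
          exact Finset.sum_congr rfl fun j _ => Bialgebra.comul_mul _ _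
      _ = ∑ j ∈ r.index, ∑ m ∈ (u j).index,
            M ((u j).left m ⊗ₜ ((u j).right m ⊗ₜ r.right j)) := by
          refine Finset.sum_congr rfl fun j _ => ?_
          rw [← (u j).eq, Finset.sum_mul]
          exact Finset.sum_congr rfl fun m _ => (hMapp _ _ _).symm
      _ = ∑ j ∈ r.index, ∑ k ∈ (v j).index,
            M (r.left j ⊗ₜ ((v j).left k ⊗ₜ (v j).right k)) := sum_T_eq M r u v
      _ = ∑ j ∈ r.index, ∑ k ∈ (v j).index, ∑ m ∈ (w j k).index,
            (r.left j * Smap π i ((w j k).right m)) ⊗ₜ[K]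
              ((v j).left k * Smap π i ((w j k).left m)) := by
          refine Finset.sum_congr rfl fun j _ => Finset.sum_congr rfl fun k _ => ?_
          rw [hMapp, comul_Smap π i (w j k), Finset.mul_sum]
          exact Finset.sum_congr rfl fun m _ => by
            rw [Algebra.TensorProduct.tmul_mul_tmul]
      _ = ∑ j ∈ r.index, ∑ k ∈ (v j).index, ∑ m ∈ (p j k).index,
            (r.left j * Smap π i ((v j).right k)) ⊗ₜ[K]
              ((p j k).left m * Smap π i ((p j k).right m)) := by
          refine Finset.sum_congr rfl fun j _ => ?_
          set T : A ⊗[K] (A ⊗[K] A) →ₗ[K] A ⊗[K] A :=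
            (TensorProduct.comm K A A).toLinearMap ∘ₗ
              TensorProduct.map
                (LinearMap.mul' K A ∘ₗ TensorProduct.map LinearMap.id (Smap π i))
                (LinearMap.mulLeft K (r.left j) ∘ₗ Smap π i) ∘ₗ
              (TensorProduct.assoc K A A A).symm.toLinearMap with hT
          have hTapp : ∀ x y z : A, T (x ⊗ₜ (y ⊗ₜ z)) =
              (r.left j * Smap π i z) ⊗ₜ[K] (x * Smap π i y) := by
            intro x y z; simp [hT]
          have key := sum_T_eq T (v j) (p j) (w j)
          simp only [hTapp] at key
          exact key.symm
      _ = ∑ j ∈ r.index, ∑ k ∈ (v j).index,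
            (r.left j * Smap π i ((v j).right k)) ⊗ₜ[K] PiMap K π i ((v j).left k) := by
          refine Finset.sum_congr rfl fun j _ => Finset.sum_congr rfl fun k _ => ?_
          rw [← tmul_sum, ← PiMap_repr π i (p j k)]
  refine ⟨∑ j ∈ r.index, ∑ k ∈ (v j).index,
      (r.left j * Smap π i ((v j).right k)) ⊗ₜ[K]
        (⟨PiMap K π i ((v j).left k), ⟨(v j).left k, rfl⟩⟩ :
          (LinearMap.range (PiMap K π i))), ?_⟩
  rw [map_sum, formula]
  refine Finset.sum_congr rfl fun j _ => ?_
  rw [map_sum]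
  rfl

end Main2


/-- `B = Π(A)` (a `K`-submodule of `A`, being the range of the linear map `Π`)
is a unital subalgebra of `A` (it contains `1` and is closed under products), and it is a
left coideal: `Δ(b) ∈ A ⊗ B` for every `b ∈ B`. -/
theorem statement1 (K A H : Type*) [CommRing K] [Ring A] [Ring H]
    [HopfAlgebra K A] [HopfAlgebra K H]
    (π : A →ₐc[K] H) (i : H →ₐc[K] A)
    (hπi : π.comp i = BialgHom.id K H) :
    (1 : A) ∈ LinearMap.range (PiMap K π i) ∧
    (∀ b b' : A, b ∈ LinearMap.range (PiMap K π i) → b' ∈ LinearMap.range (PiMap K π i) →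
        b * b' ∈ LinearMap.range (PiMap K π i)) ∧
    (∀ b : A, b ∈ LinearMap.range (PiMap K π i) →
        Coalgebra.comul (R := K) b ∈
          LinearMap.range
            (LinearMap.lTensor A (LinearMap.range (PiMap K π i)).subtype)) := by
  refine ⟨?_, ?_, ?_⟩
  · refine ⟨1, PiMap_of_coinv π i hπi 1 ?_⟩
    rw [map_one, Algebra.TensorProduct.one_def]
  · rintro b b' ⟨x, rfl⟩ ⟨y, rfl⟩
    refine ⟨_, PiMap_of_coinv π i hπi _ ?_⟩
    rw [map_mul, tau_PiMap π i hπi x, tau_PiMap π i hπi y,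
      Algebra.TensorProduct.tmul_mul_tmul, one_mul]
  · rintro b ⟨a, rfl⟩
    exact comul_PiMap_mem π i a
end

section
/- The partial trace of the braiding array Λ over its second composite index pair collapses to Kronecker deltas: for all a₁,a₂,b₁,b₂,c₁,c₂ ∈ {1,…,N}, Σ_b Λ_{c₁}{}^{c₂}{}_{b}{}^{b}|^{a₁}{}_{a₂}{}^{b₁}{}_{b₂} = δ^{a₁}_{a₂} δ^{b₁}_{c₁} δ^{c₂}_{b₂}; explicitly, Σ_{b,e,f,g,h} d^{f} (d^{a₂})⁻¹ R^{f b₁}_{a₂ g} (R⁻¹)^{a₁ g}_{e c₁} (R⁻¹)^{c₂ e}_{h b} R^{h b}_{b₂ f} = δ^{a₁}_{a₂} δ^{b₁}_{c₁} δ^{c₂}_{b₂}. -/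
open Finset

/-- Kronecker delta with values in `ℂ`. -/
def kd {α : Type*} [DecidableEq α] (a b : α) : ℂ := if a = b then 1 else 0

/-- The multiparametric `GL_{q,r}(N)` R-matrix.  Indices are 0-based: the paper index
`A ∈ {1,…,N}` corresponds to `A.val + 1`.
`R^{AB}_{CD} = δ^A_C δ^B_D (r/q_{AB} + (r−1)δ^{AB}) + (r−r⁻¹) δ^A_D δ^B_C θ^{AB}`,
with `θ^{AB} = 1` iff `A > B`. -/
noncomputable def Rgl (N : ℕ) (r : ℂ) (q : Fin N → Fin N → ℂ)
    (A B C D : Fin N) : ℂ :=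
  kd A C * kd B D * (r / q A B + (r - 1) * kd A B)
    + (r - r⁻¹) * kd A D * kd B C * (if B < A then 1 else 0)

/-- The R-matrix with all deformation parameters inverted: `R_{q⁻¹,r⁻¹}`. -/
noncomputable def RglInv (N : ℕ) (r : ℂ) (q : Fin N → Fin N → ℂ)
    (A B C D : Fin N) : ℂ :=
  Rgl N r⁻¹ (fun a b => (q a b)⁻¹) A B C D

/-- Entries of the diagonal matrix `D`: `d^A = r^{2A−1}` (paper index `A = i + 1` for the
0-based index `i`). -/
noncomputable def dgl (r : ℂ) (i : ℕ) : ℂ := r ^ (2 * i + 1)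

/-- The braiding array `Λ` of the bicovariant differential calculus on `GL_{q,r}(N)`:
`Λ_{a₁}{}^{a₂}{}_{d₁}{}^{d₂}|^{c₁}{}_{c₂}{}^{b₁}{}_{b₂}
  = Σ_{e,f,g,h} d^f (d^{c₂})⁻¹ R^{f b₁}_{c₂ g} (R⁻¹)^{c₁ g}_{e a₁}
      (R⁻¹)^{a₂ e}_{h d₁} R^{h d₂}_{b₂ f}`. -/
noncomputable def LamGL (N : ℕ) (r : ℂ) (q : Fin N → Fin N → ℂ)
    (a₁ a₂ d₁ d₂ c₁ c₂ b₁ b₂ : Fin N) : ℂ :=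
  ∑ e : Fin N, ∑ f : Fin N, ∑ g : Fin N, ∑ h : Fin N,
    dgl r f.val * (dgl r c₂.val)⁻¹ * Rgl N r q f b₁ c₂ g * RglInv N r q c₁ g e a₁ *
      RglInv N r q a₂ e h d₁ * Rgl N r q h d₂ b₂ f

lemma kd_comm {α : Type*} [DecidableEq α] (a b : α) : kd a b = kd b a := by
  simp [kd, eq_comm]

@[simp] lemma kd_self {α : Type*} [DecidableEq α] (a : α) : kd a a = 1 := by simp [kd]

lemma kd_ne {α : Type*} [DecidableEq α] {a b : α} (h : a ≠ b) : kd a b = 0 := by simp [kd, h]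

lemma sum_kd_mul {N : ℕ} (a : Fin N) (f : Fin N → ℂ) :
    ∑ x : Fin N, kd a x * f x = f a := by
  simp [kd, ite_mul, Finset.sum_ite_eq]

lemma sum_kd_mul' {N : ℕ} (a : Fin N) (f : Fin N → ℂ) :
    ∑ x : Fin N, kd x a * f x = f a := by
  simp_rw [kd_comm _ a]; exact sum_kd_mul a f

-- variant C used in L1, term1: fixed-first, fixed-first
lemma collapseC {N : ℕ} (A B : Fin N) (h : Fin N → Fin N → ℂ) :
    ∑ C : Fin N, ∑ D : Fin N, kd A C * kd B D * h C D = h A B := by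
  have h1 : ∀ C : Fin N, ∑ D : Fin N, kd A C * kd B D * h C D = kd A C * h C B := by
    intro C
    rw [show ∑ D : Fin N, kd A C * kd B D * h C D
        = ∑ D : Fin N, kd B D * (kd A C * h C D) from
      Finset.sum_congr rfl fun D _ => by ring, sum_kd_mul]
  rw [Finset.sum_congr rfl fun C _ => h1 C]
  exact sum_kd_mul A fun C => h C B

-- variant D used in L1 term2: ∑C∑D kd A D * kd B C * h C D = h B A
lemma collapseD {N : ℕ} (A B : Fin N) (h : Fin N → Fin N → ℂ) :
    ∑ C : Fin N, ∑ D : Fin N, kd A D * kd B C * h C D = h B A := by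
  have h1 : ∀ C : Fin N, ∑ D : Fin N, kd A D * kd B C * h C D = kd B C * h C A := by
    intro C
    rw [show ∑ D : Fin N, kd A D * kd B C * h C D
        = ∑ D : Fin N, kd A D * (kd B C * h C D) from
      Finset.sum_congr rfl fun D _ => by ring, sum_kd_mul]
  rw [Finset.sum_congr rfl fun C _ => h1 C]
  exact sum_kd_mul B fun C => h C A

-- variant A used in L2 term1: ∑e∑g kd e A * kd B g * h e g = h A B
lemma collapseA {N : ℕ} (A B : Fin N) (h : Fin N → Fin N → ℂ) :
    ∑ e : Fin N, ∑ g : Fin N, kd e A * kd B g * h e g = h A B := by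
  have h1 : ∀ e : Fin N, ∑ g : Fin N, kd e A * kd B g * h e g = kd e A * h e B := by
    intro e
    rw [show ∑ g : Fin N, kd e A * kd B g * h e g
        = ∑ g : Fin N, kd B g * (kd e A * h e g) from
      Finset.sum_congr rfl fun g _ => by ring, sum_kd_mul]
  rw [Finset.sum_congr rfl fun e _ => h1 e]
  exact sum_kd_mul' A fun e => h e B

-- variant B used in L2 term3: ∑e∑g kd A e * kd g B * h e g = h A B
lemma collapseB {N : ℕ} (A B : Fin N) (h : Fin N → Fin N → ℂ) :
    ∑ e : Fin N, ∑ g : Fin N, kd A e * kd g B * h e g = h A B := by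
  have h1 : ∀ e : Fin N, ∑ g : Fin N, kd A e * kd g B * h e g = kd A e * h e B := by
    intro e
    rw [show ∑ g : Fin N, kd A e * kd g B * h e g
        = ∑ g : Fin N, kd g B * (kd A e * h e g) from
      Finset.sum_congr rfl fun g _ => by ring, sum_kd_mul']
  rw [Finset.sum_congr rfl fun e _ => h1 e]
  exact sum_kd_mul A fun e => h e B

-- diagonal collapse: ∑e∑g kd e g * w e g = ∑ e, w e e
lemma collapse_diag {N : ℕ} (w : Fin N → Fin N → ℂ) :
    ∑ e : Fin N, ∑ g : Fin N, kd e g * w e g = ∑ e : Fin N, w e e :=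
  Finset.sum_congr rfl fun e _ => sum_kd_mul e (w e)

lemma RglInv_eq (N : ℕ) (r : ℂ) (q : Fin N → Fin N → ℂ) (A B C D : Fin N) :
    RglInv N r q A B C D
      = kd A C * kd B D * (r⁻¹ * q A B + (r⁻¹ - 1) * kd A B)
        + (r⁻¹ - r) * kd A D * kd B C * (if B < A then 1 else 0) := by
  simp [RglInv, Rgl, inv_inv, div_eq_mul_inv]

lemma Rgl_eq (N : ℕ) (r : ℂ) (q : Fin N → Fin N → ℂ) (A B C D : Fin N) :
    Rgl N r q A B C D
      = kd A C * kd B D * (r / q A B + (r - 1) * kd A B)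
        + (r - r⁻¹) * kd A D * kd B C * (if B < A then 1 else 0) := rfl
lemma L1 {N : ℕ} (r : ℂ) (hr : r ≠ 0) (q : Fin N → Fin N → ℂ) (hq0 : ∀ A B, q A B ≠ 0)
    (hqAA : ∀ A, q A A = r) (hqBA : ∀ A B, q B A * q A B = r ^ 2)
    (A B E F : Fin N) :
    ∑ C : Fin N, ∑ D : Fin N, RglInv N r q A B C D * Rgl N r q C D E F
      = kd A E * kd B F := by
  have step : ∀ C D : Fin N, RglInv N r q A B C D * Rgl N r q C D E F
      = kd A C * kd B D * ((r⁻¹ * q A B + (r⁻¹ - 1) * kd A B) * Rgl N r q C D E F)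
        + kd A D * kd B C * (((r⁻¹ - r) * (if B < A then 1 else 0)) * Rgl N r q C D E F) := by
    intro C D; rw [RglInv_eq]; ring
  calc ∑ C : Fin N, ∑ D : Fin N, RglInv N r q A B C D * Rgl N r q C D E F
      = (∑ C : Fin N, ∑ D : Fin N, kd A C * kd B D *
          ((r⁻¹ * q A B + (r⁻¹ - 1) * kd A B) * Rgl N r q C D E F))
        + ∑ C : Fin N, ∑ D : Fin N, kd A D * kd B C *
          (((r⁻¹ - r) * (if B < A then 1 else 0)) * Rgl N r q C D E F) := by
        rw [← Finset.sum_add_distrib]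
        refine Finset.sum_congr rfl fun C _ => ?_
        rw [← Finset.sum_add_distrib]
        exact Finset.sum_congr rfl fun D _ => step C D
    _ = (r⁻¹ * q A B + (r⁻¹ - 1) * kd A B) * Rgl N r q A B E F
        + ((r⁻¹ - r) * (if B < A then 1 else 0)) * Rgl N r q B A E F := by
        rw [collapseC A B, collapseD A B]
    _ = kd A E * kd B F := by
        rcases lt_trichotomy A B with hAB | hAB | hAB
        · rw [Rgl_eq N r q A B E F]
          simp only [if_neg (asymm hAB), kd_ne hAB.ne]
          field_simp [hq0 A B]
          ring
        · subst hAB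
          rw [Rgl_eq N r q A A E F]
          simp only [hqAA, kd_self, if_neg (lt_irrefl A)]
          field_simp
          ring
        · rw [Rgl_eq N r q A B E F, Rgl_eq N r q B A E F]
          simp only [if_pos hAB, if_neg (asymm hAB), kd_ne hAB.ne', kd_ne hAB.ne]
          have hq : q B A = r ^ 2 / q A B := by
            rw [eq_div_iff (hq0 A B)]; exact hqBA A B
          rw [hq]
          field_simp [hq0 A B]
          ring
lemma cross (r : ℂ) (hr : r ≠ 0) (i j : ℕ) (hij : i < j) :
    r^(2*i+1) * r * (r⁻¹ - r) + r^(2*j+1) * (r - r⁻¹) * r⁻¹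
      + (r - r⁻¹) * (r⁻¹ - r) * ∑ e ∈ Finset.Ioo i j, r^(2*e+1) = 0 := by
  induction j, hij using Nat.le_induction with
  | base =>
    have he : Finset.Ioo i (i+1) = ∅ := by ext x; simp
    rw [he]
    field_simp
    simp only [Nat.succ_eq_add_one]
    ring
  | succ j hij ih =>
    have hins : Finset.Ioo i (j+1) = insert j (Finset.Ioo i j) := by
      ext x; simp [Finset.mem_Ioo]; omega
    have hnm : j ∉ Finset.Ioo i j := by simp
    rw [hins, Finset.sum_insert hnm]
    have hinv : r * r⁻¹ = 1 := mul_inv_cancel₀ hr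
    linear_combination ih + ((r - r⁻¹) * r^(2*j+2)) * hinv

lemma finsum_ioo {N : ℕ} (r : ℂ) (b₁ a₁ : Fin N) :
    ∑ e : Fin N, (if b₁ < e then (1:ℂ) else 0) * (if e < a₁ then 1 else 0) * dgl r e.val
      = ∑ m ∈ Finset.Ioo (b₁ : ℕ) (a₁ : ℕ), r^(2*m+1) := by
  have h1 : ∀ e : Fin N, (if b₁ < e then (1:ℂ) else 0) * (if e < a₁ then 1 else 0) * dgl r e.val
      = if b₁ < e ∧ e < a₁ then dgl r e.val else 0 := by
    intro e
    by_cases h : b₁ < e <;> by_cases h' : e < a₁ <;> simp [h, h']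
  rw [Finset.sum_congr rfl fun e _ => h1 e, Finset.sum_ite, Finset.sum_const_zero, add_zero]
  have h2 : Finset.filter (fun e => b₁ < e ∧ e < a₁) Finset.univ = Finset.Ioo b₁ a₁ := by
    ext x; simp [Finset.mem_Ioo]
  rw [h2, ← Fin.map_valEmbedding_Ioo, Finset.sum_map]
  simp [dgl]

lemma L2 {N : ℕ} (r : ℂ) (hr : r ≠ 0) (q : Fin N → Fin N → ℂ) (hq0 : ∀ A B, q A B ≠ 0)
    (hqAA : ∀ A, q A A = r) (hqBA : ∀ A B, q B A * q A B = r ^ 2)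
    (a₁ a₂ b₁ c₁ : Fin N) :
    ∑ e : Fin N, ∑ g : Fin N,
        dgl r e.val * Rgl N r q e b₁ a₂ g * RglInv N r q a₁ g e c₁
      = dgl r a₂.val * kd a₁ a₂ * kd b₁ c₁ := by
  set H : Fin N → Fin N → ℂ := fun e g =>
    dgl r e.val * (r / q e b₁ + (r - 1) * kd e b₁) * RglInv N r q a₁ g e c₁ with hH
  set H3 : Fin N → Fin N → ℂ := fun e g =>
    dgl r e.val * ((r - r⁻¹) * kd e g * kd b₁ a₂ * (if b₁ < e then 1 else 0))
      * (r⁻¹ * q a₁ g + (r⁻¹ - 1) * kd a₁ g) with hH3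
  set W : Fin N → Fin N → ℂ := fun e g =>
    dgl r e.val * ((r - r⁻¹) * kd b₁ a₂ * (if b₁ < e then 1 else 0))
      * ((r⁻¹ - r) * kd a₁ c₁ * kd g e * (if g < a₁ then 1 else 0)) with hW
  have step : ∀ e g : Fin N,
      dgl r e.val * Rgl N r q e b₁ a₂ g * RglInv N r q a₁ g e c₁
        = kd e a₂ * kd b₁ g * H e g + kd a₁ e * kd g c₁ * H3 e g + kd e g * W e g := by
    intro e g
    rw [hH, hH3, hW]
    simp only []
    rw [Rgl_eq N r q e b₁ a₂ g, RglInv_eq N r q a₁ g e c₁]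
    ring
  have hWsum : ∑ e : Fin N, W e e
      = kd b₁ a₂ * kd a₁ c₁ * ((r - r⁻¹) * (r⁻¹ - r)
          * ∑ m ∈ Finset.Ioo (b₁ : ℕ) (a₁ : ℕ), r^(2*m+1)) := by
    calc ∑ e : Fin N, W e e
        = ∑ e : Fin N, (kd b₁ a₂ * kd a₁ c₁ * ((r - r⁻¹) * (r⁻¹ - r)))
            * ((if b₁ < e then (1:ℂ) else 0) * (if e < a₁ then 1 else 0) * dgl r e.val) := by
          refine Finset.sum_congr rfl fun e _ => ?_
          rw [hW]
          simp only [kd_self]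
          ring
      _ = (kd b₁ a₂ * kd a₁ c₁ * ((r - r⁻¹) * (r⁻¹ - r)))
            * ∑ e : Fin N, (if b₁ < e then (1:ℂ) else 0) * (if e < a₁ then 1 else 0)
              * dgl r e.val := by rw [Finset.mul_sum]
      _ = kd b₁ a₂ * kd a₁ c₁ * ((r - r⁻¹) * (r⁻¹ - r)
            * ∑ m ∈ Finset.Ioo (b₁ : ℕ) (a₁ : ℕ), r^(2*m+1)) := by
          rw [finsum_ioo]; ring
  calc ∑ e : Fin N, ∑ g : Fin N,
        dgl r e.val * Rgl N r q e b₁ a₂ g * RglInv N r q a₁ g e c₁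
      = (∑ e : Fin N, ∑ g : Fin N, kd e a₂ * kd b₁ g * H e g)
        + (∑ e : Fin N, ∑ g : Fin N, kd a₁ e * kd g c₁ * H3 e g)
        + (∑ e : Fin N, ∑ g : Fin N, kd e g * W e g) := by
        rw [← Finset.sum_add_distrib, ← Finset.sum_add_distrib]
        refine Finset.sum_congr rfl fun e _ => ?_
        rw [← Finset.sum_add_distrib, ← Finset.sum_add_distrib]
        exact Finset.sum_congr rfl fun g _ => step e g
    _ = H a₂ b₁ + H3 a₁ c₁ + ∑ e : Fin N, W e e := by
        rw [collapseA a₂ b₁ H, collapseB a₁ c₁ H3, collapse_diag W]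
    _ = dgl r a₂.val * kd a₁ a₂ * kd b₁ c₁ := by
        rw [hWsum, hH, hH3]
        simp only []
        rw [RglInv_eq N r q a₁ b₁ a₂ c₁]
        have hinv : r * r⁻¹ = 1 := mul_inv_cancel₀ hr
        by_cases h1 : a₁ = c₁
        · by_cases h2 : b₁ = a₂
          · subst h1; subst h2
            simp only [kd_self, hqAA, mul_one, one_mul]
            rcases lt_trichotomy b₁ a₁ with hba | hba | hba
            · rw [kd_ne hba.ne', kd_ne hba.ne, if_pos hba]
              have hc := cross r hr b₁.val a₁.val hba
              simp only [dgl]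
              linear_combination hc + (r^(2*(b₁:ℕ)+1)*(r⁻¹-r) + r^(2*(a₁:ℕ)+1)*(r-r⁻¹)) * hinv
            · subst hba
              rw [Finset.Ioo_self, Finset.sum_empty, if_neg (lt_irrefl b₁)]
              simp only [kd_self, dgl, hqAA]
              linear_combination r^(2*(b₁:ℕ)+1) * (r*r⁻¹ + r⁻¹ + r) * hinv
            · rw [kd_ne hba.ne', kd_ne hba.ne, if_neg (asymm hba),
                Finset.Ioo_eq_empty (by exact_mod_cast not_lt.mpr hba.le), Finset.sum_empty]
              ring
          · rw [kd_ne h2]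
            by_cases ha : a₁ = a₂
            · subst ha
              by_cases hb : b₁ = c₁
              · subst hb
                simp only [kd_self, kd_ne (fun h => h2 h.symm)]
                field_simp [hq0 a₁ b₁]
                ring
              · rw [kd_ne hb]
                ring
            · rw [kd_ne ha]
              ring
        · rw [kd_ne h1]
          by_cases ha : a₁ = a₂
          · subst ha
            by_cases hb : b₁ = c₁
            · subst hb
              simp only [kd_self, kd_ne h1]
              field_simp [hq0 a₁ b₁]
              ring
            · rw [kd_ne hb]
              ring
          · rw [kd_ne ha]
            ring
lemma swap5 {α : Type*} [Fintype α] (T : α → α → α → α → α → ℂ) :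
    ∑ b : α, ∑ e : α, ∑ f : α, ∑ g : α, ∑ h : α, T b e f g h
      = ∑ e : α, ∑ f : α, ∑ g : α, ∑ h : α, ∑ b : α, T b e f g h := by
  rw [Finset.sum_comm]
  refine Finset.sum_congr rfl fun e _ => ?_
  rw [Finset.sum_comm]
  refine Finset.sum_congr rfl fun f _ => ?_
  rw [Finset.sum_comm]
  refine Finset.sum_congr rfl fun g _ => ?_
  exact Finset.sum_comm

/-- the partial trace of the braiding array `Λ` over its second composite
index pair collapses to Kronecker deltas:
`Σ_b Λ_{c₁}{}^{c₂}{}_{b}{}^{b}|^{a₁}{}_{a₂}{}^{b₁}{}_{b₂} = δ^{a₁}_{a₂} δ^{b₁}_{c₁} δ^{c₂}_{b₂}`. -/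
theorem statement11 (N : ℕ) (hN : 1 ≤ N) (r : ℂ) (hr : r ≠ 0)
    (q : Fin N → Fin N → ℂ) (hq0 : ∀ A B, q A B ≠ 0)
    (hqAA : ∀ A, q A A = r) (hqBA : ∀ A B, q B A * q A B = r ^ 2) :
    ∀ a₁ a₂ b₁ b₂ c₁ c₂ : Fin N,
      (∑ b : Fin N, LamGL N r q c₁ c₂ b b a₁ a₂ b₁ b₂)
        = kd a₁ a₂ * kd b₁ c₁ * kd c₂ b₂ := by
  intro a₁ a₂ b₁ b₂ c₁ c₂
  have hd : (dgl r a₂.val) ≠ 0 := pow_ne_zero _ hr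
  calc ∑ b : Fin N, LamGL N r q c₁ c₂ b b a₁ a₂ b₁ b₂
      = ∑ e : Fin N, ∑ f : Fin N, ∑ g : Fin N, ∑ h : Fin N, ∑ b : Fin N,
          dgl r f.val * (dgl r a₂.val)⁻¹ * Rgl N r q f b₁ a₂ g *
            RglInv N r q a₁ g e c₁ * RglInv N r q c₂ e h b * Rgl N r q h b b₂ f := by
        simp only [LamGL]
        exact swap5 _
    _ = ∑ e : Fin N, ∑ f : Fin N, ∑ g : Fin N,
          (dgl r f.val * (dgl r a₂.val)⁻¹ * Rgl N r q f b₁ a₂ g *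
            RglInv N r q a₁ g e c₁)
          * ∑ h : Fin N, ∑ b : Fin N, RglInv N r q c₂ e h b * Rgl N r q h b b₂ f := by
        refine Finset.sum_congr rfl fun e _ => ?_
        refine Finset.sum_congr rfl fun f _ => ?_
        refine Finset.sum_congr rfl fun g _ => ?_
        rw [Finset.mul_sum]
        refine Finset.sum_congr rfl fun h _ => ?_
        rw [Finset.mul_sum]
        exact Finset.sum_congr rfl fun b _ => by ring
    _ = ∑ e : Fin N, ∑ f : Fin N, ∑ g : Fin N,
          (dgl r f.val * (dgl r a₂.val)⁻¹ * Rgl N r q f b₁ a₂ g *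
            RglInv N r q a₁ g e c₁) * (kd c₂ b₂ * kd e f) := by
        refine Finset.sum_congr rfl fun e _ => ?_
        refine Finset.sum_congr rfl fun f _ => ?_
        refine Finset.sum_congr rfl fun g _ => ?_
        rw [L1 r hr q hq0 hqAA hqBA c₂ e b₂ f]
    _ = ∑ e : Fin N, ∑ f : Fin N, kd e f *
          ∑ g : Fin N, (kd c₂ b₂ * (dgl r a₂.val)⁻¹) *
            (dgl r f.val * Rgl N r q f b₁ a₂ g * RglInv N r q a₁ g e c₁) := by
        refine Finset.sum_congr rfl fun e _ => ?_
        refine Finset.sum_congr rfl fun f _ => ?_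
        rw [Finset.mul_sum]
        exact Finset.sum_congr rfl fun g _ => by ring
    _ = ∑ e : Fin N, ∑ g : Fin N, (kd c₂ b₂ * (dgl r a₂.val)⁻¹) *
          (dgl r e.val * Rgl N r q e b₁ a₂ g * RglInv N r q a₁ g e c₁) := by
        refine Finset.sum_congr rfl fun e _ => ?_
        exact sum_kd_mul e _
    _ = (kd c₂ b₂ * (dgl r a₂.val)⁻¹) *
          ∑ e : Fin N, ∑ g : Fin N,
            dgl r e.val * Rgl N r q e b₁ a₂ g * RglInv N r q a₁ g e c₁ := by
        rw [Finset.mul_sum]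
        refine Finset.sum_congr rfl fun e _ => ?_
        rw [Finset.mul_sum]
    _ = kd a₁ a₂ * kd b₁ c₁ * kd c₂ b₂ := by
        rw [L2 r hr q hq0 hqAA hqBA a₁ a₂ b₁ c₁]
        field_simp [hd]
end
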